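/- Let S be a distributive join-semilattice with least element 0. Then S is the directed union of its finite distributive ⟨∨,0⟩-subsemilattices; that is, every finite subset F of S is contained in a finite subset T of S such that 0 ∈ T, T is closed under binary joins, and T is a distributive join-semilattice under the induced order. -/

import Mathlib

set_option maxHeartbeats 2000000

open scoped Classical

noncomputable section PudlakAux

variable {S : Type*} [SemilatticeSup S] [OrderBot S]

/-- The ideal `⋁_{A ∈ 𝒜} (⋂_{s ∈ A} ↓s)` of `S`, described concretely. -/
def JJ (𝒜 : Finset (Finset S)) : Set S :=
  {x | ∃ f : Finset S → S, (∀ A : Finset S, ∀ s ∈ A, f A ≤ s) ∧ x ≤ 𝒜.sup f}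

lemma JJ_down {𝒜 : Finset (Finset S)} {x y : S} (hx : x ∈ JJ 𝒜) (h : y ≤ x) : y ∈ JJ 𝒜 := by
  obtain ⟨f, hf, hle⟩ := hx; exact ⟨f, hf, h.trans hle⟩

lemma bot_mem_JJ (𝒜 : Finset (Finset S)) : (⊥ : S) ∈ JJ 𝒜 :=
  ⟨fun _ => ⊥, fun _ _ _ => bot_le, bot_le⟩

lemma sup_mem_JJ {𝒜 : Finset (Finset S)} {x y : S} (hx : x ∈ JJ 𝒜) (hy : y ∈ JJ 𝒜) :
    x ⊔ y ∈ JJ 𝒜 := by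
  obtain ⟨f, hf, hxf⟩ := hx; obtain ⟨g, hg, hyg⟩ := hy
  refine ⟨fun A => f A ⊔ g A, fun A s hs => sup_le (hf A s hs) (hg A s hs), ?_⟩
  exact sup_le (hxf.trans (Finset.sup_mono_fun fun A _ => le_sup_left))
    (hyg.trans (Finset.sup_mono_fun fun A _ => le_sup_right))

lemma finsetSup_mem_JJ {𝒜 : Finset (Finset S)} {ι : Type*} (G : Finset ι) (g : ι → S)
    (h : ∀ i ∈ G, g i ∈ JJ 𝒜) : G.sup g ∈ JJ 𝒜 :=
  Finset.sup_induction (bot_mem_JJ 𝒜) (fun _ hx _ hy => sup_mem_JJ hx hy) h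

lemma JJ_mono {𝒜 ℬ : Finset (Finset S)} (h : 𝒜 ⊆ ℬ) : JJ 𝒜 ⊆ JJ ℬ := by
  rintro x ⟨f, hf, hx⟩; exact ⟨f, hf, hx.trans (Finset.sup_mono h)⟩

lemma JJ_union_elim {𝒜 ℬ : Finset (Finset S)} {x : S} (hx : x ∈ JJ (𝒜 ∪ ℬ)) :
    ∃ a ∈ JJ 𝒜, ∃ b ∈ JJ ℬ, x ≤ a ⊔ b := by
  obtain ⟨f, hf, hle⟩ := hx
  exact ⟨𝒜.sup f, ⟨f, hf, le_rfl⟩, ℬ.sup f, ⟨f, hf, le_rfl⟩, by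
    rw [Finset.sup_union] at hle; exact hle⟩

lemma JJ_union_intro {𝒜 ℬ : Finset (Finset S)} {x y z : S}
    (hx : x ∈ JJ 𝒜) (hy : y ∈ JJ ℬ) (hz : z ≤ x ⊔ y) : z ∈ JJ (𝒜 ∪ ℬ) :=
  JJ_down (sup_mem_JJ (JJ_mono Finset.subset_union_left hx)
    (JJ_mono Finset.subset_union_right hy)) hz

/-- finite refinement: decompose `x ≤ G.sup g` into pieces below each `g i`. -/
lemma sup_decomp (hdist : ∀ a b c : S, c ≤ a ⊔ b → ∃ x y : S, x ≤ a ∧ y ≤ b ∧ c = x ⊔ y)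
    {ι : Type*} (G : Finset ι) (g : ι → S) :
    ∀ x : S, x ≤ G.sup g → ∃ u : ι → S, (∀ i ∈ G, u i ≤ g i) ∧ x = G.sup u := by
  classical
  induction G using Finset.induction_on with
  | empty =>
    intro x hx
    exact ⟨fun _ => ⊥, by simp, le_antisymm (by simpa using hx) bot_le⟩
  | @insert i G0 hi ih =>
    intro x hx
    rw [Finset.sup_insert] at hx
    obtain ⟨y, z, hy, hz, hxyz⟩ := hdist _ _ _ hx
    obtain ⟨u, hu, hzu⟩ := ih z hz
    have hcong : G0.sup (fun j => if j = i then y else u j) = G0.sup u :=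
      Finset.sup_congr rfl (fun j hj => if_neg (by rintro rfl; exact hi hj))
    refine ⟨fun j => if j = i then y else u j, ?_, ?_⟩
    · intro j hj0
      rcases Finset.mem_insert.mp hj0 with rfl | hjm
      · simpa using hy
      · dsimp only; rw [if_neg (by rintro rfl; exact hi hjm)]; exact hu j hjm
    · rw [Finset.sup_insert, hcong, if_pos rfl, ← hzu, ← hxyz]

/-- membership decomposition for `JJ`. -/
lemma JJ_decomp (hdist : ∀ a b c : S, c ≤ a ⊔ b → ∃ x y : S, x ≤ a ∧ y ≤ b ∧ c = x ⊔ y)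
    {𝒜 : Finset (Finset S)} {x : S} (hx : x ∈ JJ 𝒜) :
    ∃ u : Finset S → S, (∀ A : Finset S, ∀ s ∈ A, u A ≤ s) ∧ x = 𝒜.sup u := by
  classical
  obtain ⟨f, hf, hle⟩ := hx
  obtain ⟨u, hu, hxu⟩ := sup_decomp hdist 𝒜 f x hle
  refine ⟨fun A => if A ∈ 𝒜 then u A else ⊥, ?_, ?_⟩
  · intro A s hs
    by_cases hA : A ∈ 𝒜
    · dsimp only; rw [if_pos hA]; exact (hu A hA).trans (hf A s hs)
    · dsimp only; rw [if_neg hA]; exact bot_le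
  · rw [hxu]; exact (Finset.sup_congr rfl (fun A hA => (if_pos hA).symm))

/-- index for the intersection of two ideals. -/
def meetIdx (𝒜 ℬ : Finset (Finset S)) : Finset (Finset S) :=
  (𝒜 ×ˢ ℬ).image fun p => p.1 ∪ p.2

lemma JJ_meetIdx_subset_left {𝒜 ℬ : Finset (Finset S)} : JJ (meetIdx 𝒜 ℬ) ⊆ JJ 𝒜 := by
  rintro x ⟨f, hf, hle⟩
  refine ⟨fun A => ℬ.sup fun B => f (A ∪ B), ?_, ?_⟩
  · intro A s hs
    exact Finset.sup_le fun B _ => hf (A ∪ B) s (Finset.mem_union_left _ hs)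
  · refine hle.trans (Finset.sup_le ?_)
    intro C hC
    obtain ⟨p, hp, rfl⟩ := Finset.mem_image.mp hC
    obtain ⟨hp1, hp2⟩ := Finset.mem_product.mp hp
    calc f (p.1 ∪ p.2) ≤ ℬ.sup fun B => f (p.1 ∪ B) :=
          Finset.le_sup (f := fun B => f (p.1 ∪ B)) hp2
      _ ≤ _ := Finset.le_sup (f := fun A => ℬ.sup fun B => f (A ∪ B)) hp1

lemma JJ_meetIdx_subset_right {𝒜 ℬ : Finset (Finset S)} : JJ (meetIdx 𝒜 ℬ) ⊆ JJ ℬ := by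
  rintro x ⟨f, hf, hle⟩
  refine ⟨fun B => 𝒜.sup fun A => f (A ∪ B), ?_, ?_⟩
  · intro B s hs
    exact Finset.sup_le fun A _ => hf (A ∪ B) s (Finset.mem_union_right _ hs)
  · refine hle.trans (Finset.sup_le ?_)
    intro C hC
    obtain ⟨p, hp, rfl⟩ := Finset.mem_image.mp hC
    obtain ⟨hp1, hp2⟩ := Finset.mem_product.mp hp
    calc f (p.1 ∪ p.2) ≤ 𝒜.sup fun A => f (A ∪ p.2) :=
          Finset.le_sup (f := fun A => f (A ∪ p.2)) hp1
      _ ≤ _ := Finset.le_sup (f := fun B => 𝒜.sup fun A => f (A ∪ B)) hp2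

lemma mem_JJ_meetIdx (hdist : ∀ a b c : S, c ≤ a ⊔ b → ∃ x y : S, x ≤ a ∧ y ≤ b ∧ c = x ⊔ y)
    {𝒜 ℬ : Finset (Finset S)} {x : S} (hx : x ∈ JJ 𝒜) (hy : x ∈ JJ ℬ) :
    x ∈ JJ (meetIdx 𝒜 ℬ) := by
  classical
  obtain ⟨u, hu, hxu⟩ := JJ_decomp hdist hx
  have huB : ∀ A, ∃ v : Finset S → S, A ∈ 𝒜 →
      ((∀ B : Finset S, ∀ s ∈ B, v B ≤ s) ∧ u A = ℬ.sup v) := by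
    intro A
    by_cases hA : A ∈ 𝒜
    · have huA : u A ∈ JJ ℬ := JJ_down hy (hxu ▸ Finset.le_sup hA)
      obtain ⟨v, hv1, hv2⟩ := JJ_decomp hdist huA
      exact ⟨v, fun _ => ⟨hv1, hv2⟩⟩
    · exact ⟨fun _ => ⊥, fun h => absurd h hA⟩
  choose v hv using huB
  refine ⟨fun C => (𝒜 ×ˢ ℬ).sup fun p => if p.1 ∪ p.2 = C then v p.1 p.2 else ⊥, ?_, ?_⟩
  · intro C s hs
    refine Finset.sup_le fun p hp => ?_
    obtain ⟨hp1, hp2⟩ := Finset.mem_product.mp hp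
    by_cases hpc : p.1 ∪ p.2 = C
    · rw [if_pos hpc]
      rcases Finset.mem_union.mp (hpc ▸ hs) with hs1 | hs2
      · exact le_trans (((hv p.1) hp1).2 ▸ Finset.le_sup hp2) (hu p.1 s hs1)
      · exact ((hv p.1) hp1).1 p.2 s hs2
    · rw [if_neg hpc]; exact bot_le
  · rw [hxu]
    refine Finset.sup_le fun A hA => ?_
    rw [((hv A) hA).2]
    refine Finset.sup_le fun B hB => ?_
    have hmem : A ∪ B ∈ meetIdx 𝒜 ℬ :=
      Finset.mem_image.mpr ⟨(A, B), Finset.mk_mem_product hA hB, rfl⟩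
    have h1 : v A B ≤ (𝒜 ×ˢ ℬ).sup fun p => if p.1 ∪ p.2 = A ∪ B then v p.1 p.2 else ⊥ := by
      have := Finset.le_sup (f := fun p : Finset S × Finset S =>
        if p.1 ∪ p.2 = A ∪ B then v p.1 p.2 else ⊥) (Finset.mk_mem_product hA hB)
      simpa using this
    exact h1.trans (Finset.le_sup (f := fun C => (𝒜 ×ˢ ℬ).sup
      fun p => if p.1 ∪ p.2 = C then v p.1 p.2 else ⊥) hmem)

lemma JJ_sup_decomp (hdist : ∀ a b c : S, c ≤ a ⊔ b → ∃ x y : S, x ≤ a ∧ y ≤ b ∧ c = x ⊔ y)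
    (𝒢 : Finset (Finset (Finset S))) :
    ∀ x : S, x ∈ JJ (𝒢.sup id) →
      ∃ u : Finset (Finset S) → S, (∀ Q, u Q ∈ JJ Q) ∧ x = 𝒢.sup u := by
  classical
  induction 𝒢 using Finset.induction_on with
  | empty =>
    intro x hx
    obtain ⟨f, hf, hle⟩ := hx
    simp only [Finset.sup_empty] at hle
    refine ⟨fun _ => ⊥, fun Q => bot_mem_JJ Q, ?_⟩
    simpa using le_antisymm hle bot_le
  | @insert G 𝒢0 hG ih =>
    intro x hx
    rw [Finset.sup_insert] at hx
    obtain ⟨a, ha, b, hb, hab⟩ := JJ_union_elim (𝒜 := id G) hx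
    obtain ⟨y, z, hy, hz, hyz⟩ := hdist _ _ _ hab
    obtain ⟨u, hu1, hu2⟩ := ih z (JJ_down hb hz)
    refine ⟨fun R => if R = G then y else u R, ?_, ?_⟩
    · intro R
      dsimp only
      by_cases hR : R = G
      · rw [if_pos hR]; subst hR; exact JJ_down ha hy
      · rw [if_neg hR]; exact hu1 R
    · have hcong : 𝒢0.sup (fun R => if R = G then y else u R) = 𝒢0.sup u :=
        Finset.sup_congr rfl (fun R hR => if_neg (by rintro rfl; exact hG hR))
      rw [Finset.sup_insert, hcong, if_pos rfl, ← hu2, hyz]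

variable (F : Finset S)

def pudP2 : Finset (Finset (Finset S)) := F.powerset.powerset

lemma mem_pudP2 {𝒜 : Finset (Finset S)} : 𝒜 ∈ pudP2 F ↔ ∀ A ∈ 𝒜, A ⊆ F := by
  rw [pudP2, Finset.mem_powerset, Finset.subset_iff]
  simp [Finset.mem_powerset]

/-- join-irreducibility (within the finite lattice of ideals indexed by `pudP2 F`). -/
def pudIrr (Q : Finset (Finset S)) : Prop :=
  ∀ ℬ ∈ pudP2 F, ∀ 𝒞 ∈ pudP2 F,
    JJ Q = JJ (ℬ ∪ 𝒞) → JJ Q = JJ ℬ ∨ JJ Q = JJ 𝒞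

def pudIrrS : Finset (Finset (Finset S)) := (pudP2 F).filter (pudIrr F)

def pudBelow (𝒜 : Finset (Finset S)) : Finset (Finset (Finset S)) :=
  (pudIrrS F).filter (fun Q => JJ Q ⊆ JJ 𝒜)

lemma pudBelow_mono {𝒜 ℬ : Finset (Finset S)} (h : JJ 𝒜 ⊆ JJ ℬ) :
    pudBelow F 𝒜 ⊆ pudBelow F ℬ := by
  intro Q hQ
  rw [pudBelow, Finset.mem_filter] at hQ ⊢
  exact ⟨hQ.1, hQ.2.trans h⟩

lemma mem_pudBelow {𝒜 Q : Finset (Finset S)} :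
    Q ∈ pudBelow F 𝒜 ↔ (Q ∈ pudP2 F ∧ pudIrr F Q) ∧ JJ Q ⊆ JJ 𝒜 := by
  simp [pudBelow, pudIrrS, Finset.mem_filter]

/-- every ideal indexed in `pudP2 F` is the join of the irreducible ideals below it. -/
lemma pud_repr : ∀ 𝒜 ∈ pudP2 F, JJ 𝒜 ⊆ JJ ((pudBelow F 𝒜).sup id) := by
  classical
  suffices H : ∀ n : ℕ, ∀ 𝒜, 𝒜 ∈ pudP2 F →
      ((pudP2 F).filter (fun ℬ => JJ ℬ ⊂ JJ 𝒜)).card ≤ n →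
      JJ 𝒜 ⊆ JJ ((pudBelow F 𝒜).sup id) by
    exact fun 𝒜 h => H _ 𝒜 h le_rfl
  intro n
  induction n with
  | zero =>
    intro 𝒜 h𝒜 hcard
    by_cases hirr : pudIrr F 𝒜
    · have h1 : 𝒜 ∈ pudBelow F 𝒜 := (mem_pudBelow F).mpr ⟨⟨h𝒜, hirr⟩, subset_rfl⟩
      exact JJ_mono (Finset.le_sup (f := id) h1)
    · exfalso
      rw [pudIrr] at hirr; push_neg at hirr
      obtain ⟨ℬ, hℬ, 𝒞, h𝒞, heq, hne1, hne2⟩ := hirr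
      have hssub : JJ ℬ ⊂ JJ 𝒜 :=
        lt_of_le_of_ne (heq ▸ JJ_mono Finset.subset_union_left) (fun h => hne1 h.symm)
      have : ℬ ∈ (pudP2 F).filter (fun 𝒟 => JJ 𝒟 ⊂ JJ 𝒜) := Finset.mem_filter.mpr ⟨hℬ, hssub⟩
      have := Finset.card_pos.mpr ⟨ℬ, this⟩
      omega
  | succ n IH =>
    intro 𝒜 h𝒜 hcard
    by_cases hirr : pudIrr F 𝒜
    · have h1 : 𝒜 ∈ pudBelow F 𝒜 := (mem_pudBelow F).mpr ⟨⟨h𝒜, hirr⟩, subset_rfl⟩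
      exact JJ_mono (Finset.le_sup (f := id) h1)
    · rw [pudIrr] at hirr; push_neg at hirr
      obtain ⟨ℬ, hℬ, 𝒞, h𝒞, heq, hne1, hne2⟩ := hirr
      have hssubB : JJ ℬ ⊂ JJ 𝒜 :=
        lt_of_le_of_ne (heq ▸ JJ_mono Finset.subset_union_left) (fun h => hne1 h.symm)
      have hssubC : JJ 𝒞 ⊂ JJ 𝒜 :=
        lt_of_le_of_ne (heq ▸ JJ_mono Finset.subset_union_right) (fun h => hne2 h.symm)
      have hmeas : ∀ 𝒟 : Finset (Finset S), 𝒟 ∈ pudP2 F → JJ 𝒟 ⊂ JJ 𝒜 →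
          ((pudP2 F).filter (fun 𝒟' => JJ 𝒟' ⊂ JJ 𝒟)).card ≤ n := by
        intro 𝒟 h𝒟 hss
        have hsub : (pudP2 F).filter (fun 𝒟' => JJ 𝒟' ⊂ JJ 𝒟) ⊂
            (pudP2 F).filter (fun 𝒟' => JJ 𝒟' ⊂ JJ 𝒜) := by
          rw [Finset.ssubset_iff_of_subset
            (Finset.monotone_filter_right _ (fun 𝒟' _ h => h.trans hss))]
          exact ⟨𝒟, Finset.mem_filter.mpr ⟨h𝒟, hss⟩,
            fun hc => (lt_irrefl _ (Finset.mem_filter.mp hc).2)⟩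
        have := Finset.card_lt_card hsub
        omega
      have IHB := IH ℬ hℬ (hmeas ℬ hℬ hssubB)
      have IHC := IH 𝒞 h𝒞 (hmeas 𝒞 h𝒞 hssubC)
      intro x hx
      rw [heq] at hx
      obtain ⟨b, hb, c, hc, hxbc⟩ := JJ_union_elim hx
      have hb' : b ∈ JJ ((pudBelow F 𝒜).sup id) :=
        JJ_mono (Finset.sup_mono (pudBelow_mono F hssubB.le)) (IHB hb)
      have hc' : c ∈ JJ ((pudBelow F 𝒜).sup id) :=
        JJ_mono (Finset.sup_mono (pudBelow_mono F hssubC.le)) (IHC hc)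
      exact JJ_down (sup_mem_JJ hb' hc') hxbc

lemma pudP2_union {𝒜 ℬ : Finset (Finset S)} (h𝒜 : 𝒜 ∈ pudP2 F) (hℬ : ℬ ∈ pudP2 F) :
    𝒜 ∪ ℬ ∈ pudP2 F := by
  rw [mem_pudP2] at *
  intro A hA
  rcases Finset.mem_union.mp hA with h | h
  · exact h𝒜 A h
  · exact hℬ A h

lemma pudP2_meetIdx {𝒜 ℬ : Finset (Finset S)} (h𝒜 : 𝒜 ∈ pudP2 F) (hℬ : ℬ ∈ pudP2 F) :
    meetIdx 𝒜 ℬ ∈ pudP2 F := by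
  rw [mem_pudP2] at *
  intro C hC
  obtain ⟨p, hp, rfl⟩ := Finset.mem_image.mp hC
  obtain ⟨hp1, hp2⟩ := Finset.mem_product.mp hp
  exact Finset.union_subset (h𝒜 _ hp1) (hℬ _ hp2)

/-- irreducible ideals are join-prime among the indexed ideals. -/
lemma pud_prime (hdist : ∀ a b c : S, c ≤ a ⊔ b → ∃ x y : S, x ≤ a ∧ y ≤ b ∧ c = x ⊔ y)
    {Q 𝒜 ℬ : Finset (Finset S)} (hQ : Q ∈ pudP2 F) (hQirr : pudIrr F Q)
    (h𝒜 : 𝒜 ∈ pudP2 F) (hℬ : ℬ ∈ pudP2 F) (h : JJ Q ⊆ JJ (𝒜 ∪ ℬ)) :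
    JJ Q ⊆ JJ 𝒜 ∨ JJ Q ⊆ JJ ℬ := by
  have key : JJ Q = JJ (meetIdx Q 𝒜 ∪ meetIdx Q ℬ) := by
    apply Set.Subset.antisymm
    · intro x hx
      obtain ⟨a, ha, b, hb, hxab⟩ := JJ_union_elim (h hx)
      obtain ⟨y, z, hy, hz, hxyz⟩ := hdist _ _ _ hxab
      have hyQ : y ∈ JJ Q := JJ_down hx (hxyz ▸ le_sup_left)
      have hzQ : z ∈ JJ Q := JJ_down hx (hxyz ▸ le_sup_right)
      have hy' : y ∈ JJ (meetIdx Q 𝒜) := mem_JJ_meetIdx hdist hyQ (JJ_down ha hy)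
      have hz' : z ∈ JJ (meetIdx Q ℬ) := mem_JJ_meetIdx hdist hzQ (JJ_down hb hz)
      exact JJ_union_intro hy' hz' hxyz.le
    · intro x hx
      obtain ⟨a, ha, b, hb, hxab⟩ := JJ_union_elim hx
      exact JJ_down (sup_mem_JJ (JJ_meetIdx_subset_left ha) (JJ_meetIdx_subset_left hb)) hxab
  rcases hQirr (meetIdx Q 𝒜) (pudP2_meetIdx F hQ h𝒜) (meetIdx Q ℬ) (pudP2_meetIdx F hQ hℬ)
      key with h1 | h1
  · exact Or.inl (h1 ▸ (JJ_meetIdx_subset_right (𝒜 := Q) (ℬ := 𝒜)))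
  · exact Or.inr (h1 ▸ (JJ_meetIdx_subset_right (𝒜 := Q) (ℬ := ℬ)))

end PudlakAux

/-- Ershov–Pudlák. Every distributive join-semilattice with zero is the
directed union of its finite distributive `⟨∨,0⟩`-subsemilattices: every finite subset `F`
is contained in a finite `T ⊆ S` containing `⊥`, closed under `⊔`, and distributive as a
join-semilattice in the induced order. -/
theorem stmt4 (S : Type*) [SemilatticeSup S] [OrderBot S]
    (hdist : ∀ a b c : S, c ≤ a ⊔ b → ∃ x y : S, x ≤ a ∧ y ≤ b ∧ c = x ⊔ y)
    (F : Finset S) :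
    ∃ T : Finset S, F ⊆ T ∧ (⊥ : S) ∈ T ∧
      (∀ x ∈ T, ∀ y ∈ T, x ⊔ y ∈ T) ∧
      (∀ a ∈ T, ∀ b ∈ T, ∀ c ∈ T, c ≤ a ⊔ b →
        ∃ x ∈ T, ∃ y ∈ T, x ≤ a ∧ y ≤ b ∧ c = x ⊔ y) := by
  classical
  -- separating witnesses
  have hqex : ∀ Q M : Finset (Finset S), ∃ x : S,
      x ∈ JJ Q ∧ (¬ JJ Q ⊆ JJ M → x ∉ JJ M) := by
    intro Q M
    by_cases h : JJ Q ⊆ JJ M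
    · exact ⟨⊥, bot_mem_JJ Q, fun h' => absurd h h'⟩
    · obtain ⟨x, hx, hxM⟩ := Set.not_subset.mp h
      exact ⟨x, hx, fun _ => hxM⟩
  choose q hq1 hq2 using hqex
  -- decompositions of the elements of F over irreducibles
  have hEex : ∀ s : S, ∃ u : Finset (Finset S) → S,
      (∀ Q, u Q ∈ JJ Q) ∧
      (s ∈ F → s = (pudBelow F ({{s}} : Finset (Finset S))).sup u) := by
    intro s
    by_cases hs : s ∈ F
    · have hsingmem : ({{s}} : Finset (Finset S)) ∈ pudP2 F := by
        rw [mem_pudP2]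
        intro A hA
        rw [Finset.mem_singleton] at hA
        subst hA
        exact Finset.singleton_subset_iff.mpr hs
      have hsJ : s ∈ JJ ({{s}} : Finset (Finset S)) := by
        refine ⟨fun A => if A = {s} then s else ⊥, ?_, ?_⟩
        · intro A t ht
          dsimp only
          by_cases hA : A = {s}
          · rw [if_pos hA]
            subst hA
            rw [Finset.mem_singleton] at ht
            exact ht.ge
          · rw [if_neg hA]; exact bot_le
        · rw [Finset.sup_singleton, if_pos rfl]
      have h1 : s ∈ JJ ((pudBelow F ({{s}} : Finset (Finset S))).sup id) :=
        pud_repr F _ hsingmem hsJ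
      obtain ⟨u, hu1, hu2⟩ := JJ_sup_decomp hdist _ s h1
      exact ⟨u, hu1, fun _ => hu2⟩
    · exact ⟨fun _ => ⊥, fun Q => bot_mem_JJ Q, fun h => absurd h hs⟩
  choose uu huu1 huu2 using hEex
  -- the value assigned to each irreducible ideal
  obtain ⟨w, hw⟩ : ∃ w : Finset (Finset S) → S,
      w = fun Q => (pudP2 F).sup (q Q) ⊔ F.sup (fun s => uu s Q) := ⟨_, rfl⟩
  have hw_mem : ∀ Q, w Q ∈ JJ Q := by
    intro Q
    rw [hw]
    exact sup_mem_JJ (finsetSup_mem_JJ _ _ fun M _ => hq1 Q M)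
      (finsetSup_mem_JJ _ _ fun s _ => huu1 s Q)
  -- the join-homomorphism from the finite distributive lattice of ideals into S
  obtain ⟨e, he⟩ : ∃ e : Finset (Finset S) → S,
      e = fun 𝒜 => (pudBelow F 𝒜).sup w := ⟨_, rfl⟩
  have he_mem : ∀ 𝒜, e 𝒜 ∈ JJ 𝒜 := by
    intro 𝒜
    rw [he]
    refine finsetSup_mem_JJ _ _ fun Q hQ => ?_
    exact ((mem_pudBelow F).mp hQ).2 (hw_mem Q)
  have he_mono : ∀ {𝒜 ℬ : Finset (Finset S)}, JJ 𝒜 ⊆ JJ ℬ → e 𝒜 ≤ e ℬ := by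
    intro 𝒜 ℬ h
    simp only [he]
    exact Finset.sup_mono (pudBelow_mono F h)
  have hhom : ∀ 𝒜 ∈ pudP2 F, ∀ ℬ ∈ pudP2 F, e (𝒜 ∪ ℬ) = e 𝒜 ⊔ e ℬ := by
    intro 𝒜 h𝒜 ℬ hℬ
    have hb : pudBelow F (𝒜 ∪ ℬ) = pudBelow F 𝒜 ∪ pudBelow F ℬ := by
      ext Q
      rw [Finset.mem_union, mem_pudBelow, mem_pudBelow, mem_pudBelow]
      constructor
      · rintro ⟨hQi, hQs⟩
        rcases pud_prime F hdist hQi.1 hQi.2 h𝒜 hℬ hQs with h | h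
        · exact Or.inl ⟨hQi, h⟩
        · exact Or.inr ⟨hQi, h⟩
      · rintro (⟨hQi, hQs⟩ | ⟨hQi, hQs⟩)
        · exact ⟨hQi, hQs.trans (JJ_mono Finset.subset_union_left)⟩
        · exact ⟨hQi, hQs.trans (JJ_mono Finset.subset_union_right)⟩
    simp only [he]
    rw [hb, Finset.sup_union]
  -- the key property obtained from the separating witnesses
  have hC : ∀ 𝒜 ℳ : Finset (Finset S), ℳ ∈ pudP2 F → e 𝒜 ∈ JJ ℳ → e 𝒜 ≤ e ℳ := by
    intro 𝒜 ℳ hℳ hmem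
    simp only [he] at hmem ⊢
    refine Finset.sup_le fun Q hQ => ?_
    have hwQ : w Q ≤ (pudBelow F 𝒜).sup w := Finset.le_sup hQ
    have hwQM : w Q ∈ JJ ℳ := JJ_down hmem hwQ
    have hQM : JJ Q ⊆ JJ ℳ := by
      by_contra hcon
      have hqle : q Q ℳ ≤ w Q := by
        rw [hw]
        exact le_sup_left.trans' (Finset.le_sup (f := q Q) hℳ)
      exact hq2 Q ℳ hcon (JJ_down hwQM hqle)
    have hQb : Q ∈ pudBelow F ℳ :=
      (mem_pudBelow F).mpr ⟨((mem_pudBelow F).mp hQ).1, hQM⟩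
    exact Finset.le_sup hQb
  -- e sends the principal ideal of s ∈ F to s
  have hes : ∀ s ∈ F, e ({{s}} : Finset (Finset S)) = s := by
    intro s hs
    apply le_antisymm
    · obtain ⟨f, hf, hle⟩ := he_mem ({{s}} : Finset (Finset S))
      rw [Finset.sup_singleton] at hle
      exact hle.trans (hf {s} s (Finset.mem_singleton_self s))
    · conv_lhs => rw [huu2 s hs]
      simp only [he]
      refine Finset.sup_le fun Q hQ => ?_
      have h1 : uu s Q ≤ w Q := by
        rw [hw]
        exact le_sup_right.trans' (Finset.le_sup (f := fun s' => uu s' Q) hs)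
      exact h1.trans (Finset.le_sup hQ)
  -- the witness
  refine ⟨(pudP2 F).image e, ?_, ?_, ?_, ?_⟩
  · intro s hs
    refine Finset.mem_image.mpr ⟨({{s}} : Finset (Finset S)), ?_, hes s hs⟩
    rw [mem_pudP2]
    intro A hA
    rw [Finset.mem_singleton] at hA
    subst hA
    exact Finset.singleton_subset_iff.mpr hs
  · refine Finset.mem_image.mpr ⟨(∅ : Finset (Finset S)), ?_, ?_⟩
    · rw [mem_pudP2]; intro A hA; exact absurd hA (Finset.notMem_empty A)
    · simp only [he]
      refine le_antisymm (Finset.sup_le fun Q hQ => ?_) bot_le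
      have hwQ : w Q ∈ JJ (∅ : Finset (Finset S)) := ((mem_pudBelow F).mp hQ).2 (hw_mem Q)
      obtain ⟨f, hf, hle⟩ := hwQ
      simpa using hle
  · rintro x hx y hy
    obtain ⟨𝒜, h𝒜, rfl⟩ := Finset.mem_image.mp hx
    obtain ⟨ℬ, hℬ, rfl⟩ := Finset.mem_image.mp hy
    refine Finset.mem_image.mpr ⟨𝒜 ∪ ℬ, pudP2_union F h𝒜 hℬ, ?_⟩
    rw [hhom 𝒜 h𝒜 ℬ hℬ]
  · rintro a ha b hb c hc hcab
    obtain ⟨𝒜, h𝒜, rfl⟩ := Finset.mem_image.mp ha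
    obtain ⟨ℬ, hℬ, rfl⟩ := Finset.mem_image.mp hb
    obtain ⟨𝒦, h𝒦, rfl⟩ := Finset.mem_image.mp hc
    have hU : 𝒜 ∪ ℬ ∈ pudP2 F := pudP2_union F h𝒜 hℬ
    have h1 : e 𝒦 ∈ JJ (𝒜 ∪ ℬ) := by
      refine JJ_down (he_mem (𝒜 ∪ ℬ)) ?_
      rw [hhom 𝒜 h𝒜 ℬ hℬ]
      exact hcab
    have h2 : e 𝒦 ∈ JJ (meetIdx 𝒦 (𝒜 ∪ ℬ)) := mem_JJ_meetIdx hdist (he_mem 𝒦) h1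
    have h3 : e 𝒦 ≤ e (meetIdx 𝒦 (𝒜 ∪ ℬ)) := hC 𝒦 _ (pudP2_meetIdx F h𝒦 hU) h2
    have h4 : meetIdx 𝒦 (𝒜 ∪ ℬ) = meetIdx 𝒦 𝒜 ∪ meetIdx 𝒦 ℬ := by
      ext C
      simp only [meetIdx, Finset.mem_image, Finset.mem_union, Finset.mem_product]
      constructor
      · rintro ⟨p, ⟨hp1, hp2⟩, rfl⟩
        rcases hp2 with h | h
        · exact Or.inl ⟨p, ⟨hp1, h⟩, rfl⟩
        · exact Or.inr ⟨p, ⟨hp1, h⟩, rfl⟩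
      · rintro (⟨p, ⟨hp1, hp2⟩, rfl⟩ | ⟨p, ⟨hp1, hp2⟩, rfl⟩)
        · exact ⟨p, ⟨hp1, Or.inl hp2⟩, rfl⟩
        · exact ⟨p, ⟨hp1, Or.inr hp2⟩, rfl⟩
    have hxy : e (meetIdx 𝒦 𝒜) ⊔ e (meetIdx 𝒦 ℬ) = e (meetIdx 𝒦 (𝒜 ∪ ℬ)) := by
      rw [h4]
      exact (hhom _ (pudP2_meetIdx F h𝒦 h𝒜) _ (pudP2_meetIdx F h𝒦 hℬ)).symm
    have h5 : e (meetIdx 𝒦 (𝒜 ∪ ℬ)) ≤ e 𝒦 := he_mono JJ_meetIdx_subset_left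
    refine ⟨e (meetIdx 𝒦 𝒜),
      Finset.mem_image.mpr ⟨_, pudP2_meetIdx F h𝒦 h𝒜, rfl⟩,
      e (meetIdx 𝒦 ℬ),
      Finset.mem_image.mpr ⟨_, pudP2_meetIdx F h𝒦 hℬ, rfl⟩,
      he_mono JJ_meetIdx_subset_right,
      he_mono JJ_meetIdx_subset_right, ?_⟩
    rw [hxy]
    exact le_antisymm h3 h5
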